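/- There exist 50 points p₁, …, p₅₀ in the unit square [0,1]² ⊆ ℝ² such that ‖pᵢ − pⱼ‖ ≥ 0.166 for all i ≠ j. -/

import Mathlib

def pts50 : List (ℤ × ℤ) := [(1439, 1549), (8560, 7504), (1441, 3214), (4320, 1547), (4243, 3334), (7122, 3333), (5376, 10000), (8562, 4165), (5683, 2501), (2803, 4168), (7042, 10000), (2046, 0), (5376, 0), (0, 5954), (1441, 6786), (3710, 10000), (8522, 766), (2046, 10000), (5683, 4167), (8522, 9234), (4243, 5000), (0, 2382), (2803, 5832), (7120, 1662), (7042, 0), (1363, 5000), (4320, 8453), (5683, 7499), (2880, 7620), (0, 4046), (10000, 10000), (7122, 6667), (7120, 8338), (2, 10000), (8562, 5835), (7123, 5000), (4243, 6666), (0, 7618), (10000, 3328), (10000, 1664), (8560, 2496), (10000, 5000), (10000, 0), (1439, 8451), (5683, 5833), (0, 459), (3710, 0), (10000, 8336), (10000, 6672), (2880, 2380)]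

def P50 (i : Fin 50) : ℤ × ℤ := pts50.getD i.val (0, 0)

noncomputable def p50 (i : Fin 50) : EuclideanSpace ℝ (Fin 2) :=
  WithLp.toLp 2 (fun t : Fin 2 => (if t = 0 then ((P50 i).1 : ℝ) else ((P50 i).2 : ℝ)) / 10000)

lemma P50_range : ∀ i : Fin 50,
    0 ≤ (P50 i).1 ∧ (P50 i).1 ≤ 10000 ∧ 0 ≤ (P50 i).2 ∧ (P50 i).2 ≤ 10000 := by decide

lemma P50_sep : ∀ i j : Fin 50, i ≠ j →
    (2755600 : ℤ) ≤ ((P50 i).1 - (P50 j).1) ^ 2 + ((P50 i).2 - (P50 j).2) ^ 2 := by decide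

lemma key_sqrt (a b : ℤ) (h : (2755600 : ℤ) ≤ a ^ 2 + b ^ 2) :
    (0.166 : ℝ) ≤ Real.sqrt ((((a : ℝ)) / 10000) ^ 2 + (((b : ℝ)) / 10000) ^ 2) := by
  rw [Real.le_sqrt (by norm_num) (by positivity)]
  have h' : (2755600 : ℝ) ≤ (a : ℝ) ^ 2 + (b : ℝ) ^ 2 := by exact_mod_cast h
  nlinarith [h']

/-- There exist 50 points in the unit square `[0,1]²` with all pairwise
Euclidean distances at least 0.166 (point-spreading form of the improved
packing of 50 equal disks in a square). -/
theorem packing_50_disks :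
    ∃ p : Fin 50 → EuclideanSpace ℝ (Fin 2),
      (∀ i, ∀ t : Fin 2, p i t ∈ Set.Icc (0 : ℝ) 1) ∧
      ∀ i j, i ≠ j → (0.166 : ℝ) ≤ ‖p i - p j‖ := by
  refine ⟨p50, ?_, ?_⟩
  · intro i t
    obtain ⟨h1, h2, h3, h4⟩ := P50_range i
    unfold p50
    simp only [WithLp.ofLp_toLp]
    constructor
    · split
      · positivity
      · positivity
    · split
      · rw [div_le_one (by norm_num)]; exact_mod_cast h2
      · rw [div_le_one (by norm_num)]; exact_mod_cast h4
  · intro i j hij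
    have hsep := P50_sep i j hij
    rw [EuclideanSpace.norm_eq]
    simp only [Fin.sum_univ_two]
    have h0 : (p50 i - p50 j) 0 = (((P50 i).1 - (P50 j).1 : ℤ) : ℝ) / 10000 := by
      show p50 i 0 - p50 j 0 = _
      simp only [p50, WithLp.ofLp_toLp, if_pos rfl]
      push_cast
      ring
    have h1 : (p50 i - p50 j) 1 = (((P50 i).2 - (P50 j).2 : ℤ) : ℝ) / 10000 := by
      show p50 i 1 - p50 j 1 = _
      simp only [p50, WithLp.ofLp_toLp, if_neg (by decide : (1 : Fin 2) ≠ 0)]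
      push_cast
      ring
    rw [h0, h1, Real.norm_eq_abs, Real.norm_eq_abs, sq_abs, sq_abs]
    exact key_sqrt _ _ hsep
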